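/- arXiv:1312.1814 — 3 statements merged into one kernel-verified Lean document; each statement's English description precedes it below -/
import Mathlib

section
/- For any x ∈ ℝⁿ, the Fréchet subdifferential of the counting function c at x is contained in X_{I⊥}(x) = {y ∈ ℝⁿ : y_i = 0 whenever x_i ≠ 0}. -/
open Filter Topology

private lemma coord_abs_le_norm {n : ℕ} (v : EuclideanSpace ℝ (Fin n)) (j : Fin n) :
    |v j| ≤ ‖v‖ := by
  have h := abs_real_inner_le_norm (EuclideanSpace.single j (1:ℝ)) v
  simpa [EuclideanSpace.inner_single_left] using h

theorem frechet_subset_XIorth (n : ℕ) (x : EuclideanSpace ℝ (Fin n))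
    (c : EuclideanSpace ℝ (Fin n) → ℝ)
    (hc : ∀ y, c y = (Set.ncard {i : Fin n | y i ≠ 0} : ℝ))
    (xs : EuclideanSpace ℝ (Fin n))
    (hxs : 0 ≤ Filter.liminf
      (fun y => (c y - c x - inner ℝ xs (y - x)) / ‖y - x‖) (𝓝[≠] x)) :
    ∀ i, x i ≠ 0 → xs i = 0 := by
  intro i hi
  set u : EuclideanSpace ℝ (Fin n) → ℝ :=
    fun y => (c y - c x - inner ℝ xs (y - x)) / ‖y - x‖ with hu
  -- a positive lower bound on the nonzero coordinates of x
  obtain ⟨j0, hj0mem, hj0min⟩ :=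
    Finset.exists_min_image (Finset.univ.filter fun j => x j ≠ 0) (fun j => |x j|)
      ⟨i, by simp [hi]⟩
  set δ : ℝ := |x j0| with hδdef
  have hδpos : 0 < δ := abs_pos.2 (by simpa using hj0mem)
  have hδle : ∀ j, x j ≠ 0 → δ ≤ |x j| := fun j hj => hj0min j (by simp [hj])
  -- boundedness from below of u near x
  have hbdd : Filter.IsBoundedUnder (· ≥ ·) (𝓝[≠] x) u := by
    refine ⟨-‖xs‖, ?_⟩
    rw [Filter.eventually_map]
    have h1 : ∀ᶠ y in 𝓝[≠] x, dist y x < δ := by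
      have h1' : ∀ᶠ y in 𝓝 x, dist y x < δ := by
        filter_upwards [Metric.ball_mem_nhds x hδpos] with y hy using Metric.mem_ball.mp hy
      exact h1'.filter_mono nhdsWithin_le_nhds
    have h2 : ∀ᶠ y in 𝓝[≠] x, y ≠ x := by
      filter_upwards [self_mem_nhdsWithin] with y hy using hy
    filter_upwards [h1, h2] with y hyd hyne
    have hnorm : 0 < ‖y - x‖ := by
      rw [norm_pos_iff]; exact sub_ne_zero.mpr hyne
    -- c x ≤ c y
    have hsub : {j : Fin n | x j ≠ 0} ⊆ {j : Fin n | y j ≠ 0} := by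
      intro j hj
      simp only [Set.mem_setOf_eq] at hj ⊢
      intro hyj
      have hyd' : ‖y - x‖ < δ := by rwa [← dist_eq_norm]
      have h3 : |y j - x j| ≤ ‖y - x‖ := coord_abs_le_norm (y - x) j
      rw [hyj] at h3
      simp only [zero_sub, abs_neg] at h3
      linarith [hδle j hj]
    have hcc : c x ≤ c y := by
      rw [hc x, hc y]
      exact_mod_cast Set.ncard_le_ncard hsub (Set.toFinite _)
    have hinner : (inner ℝ xs (y - x) : ℝ) ≤ ‖xs‖ * ‖y - x‖ := real_inner_le_norm _ _
    show -‖xs‖ ≤ u y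
    rw [hu]
    rw [le_div_iff₀ hnorm]
    nlinarith
  -- key computation on the path t ↦ x + t • e
  set e : EuclideanSpace ℝ (Fin n) := EuclideanSpace.single i (1:ℝ) with he
  have hepath : ∀ t : ℝ, t ≠ 0 → |t| < |x i| →
      u (x + t • e) = -(t * xs i) / |t| := by
    intro t ht htlt
    have hsub : (x + t • e) - x = t • e := by abel
    have hnorm : ‖(x + t • e) - x‖ = |t| := by
      rw [hsub, norm_smul, he, EuclideanSpace.norm_single]
      simp
    have hinner : (inner ℝ xs ((x + t • e) - x) : ℝ) = t * xs i := by
      rw [hsub, inner_smul_right, he, EuclideanSpace.inner_single_right]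
      simp [mul_comm]
    have happ_i : (x + t • e) i = x i + t := by
      simp [he, PiLp.add_apply, PiLp.smul_apply, EuclideanSpace.single_apply]
    have happ_ne : ∀ j : Fin n, j ≠ i → (x + t • e) j = x j := by
      intro j hj
      simp [he, PiLp.add_apply, PiLp.smul_apply, EuclideanSpace.single_apply, hj]
    have hcoords : {j : Fin n | (x + t • e) j ≠ 0} = {j : Fin n | x j ≠ 0} := by
      ext j
      simp only [Set.mem_setOf_eq]
      by_cases hji : j = i
      · subst hji
        rw [happ_i]
        constructor
        · intro _; exact hi
        · intro _ hcon
          have ht' : t = -(x j) := by linarith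
          rw [ht', abs_neg] at htlt
          exact lt_irrefl _ htlt
      · rw [happ_ne j hji]
    have hcx : c (x + t • e) = c x := by
      rw [hc, hc, hcoords]
    rw [hu]
    simp only [hcx, hnorm, hinner]
    ring_nf
  have hene : e ≠ 0 := by
    intro hcon
    have : e i = 0 := by rw [hcon]; rfl
    rw [he, EuclideanSpace.single_apply, if_pos rfl] at this
    exact one_ne_zero this
  have htendsto : ∀ l : Filter ℝ, l ≤ 𝓝[≠] (0:ℝ) →
      Filter.Tendsto (fun t : ℝ => x + t • e) l (𝓝[≠] x) := by
    intro l hl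
    apply tendsto_nhdsWithin_of_tendsto_nhds_of_eventually_within
    · have : Filter.Tendsto (fun t : ℝ => x + t • e) (𝓝 0) (𝓝 x) := by
        have hcont : Continuous (fun t : ℝ => x + t • e) :=
          continuous_const.add (continuous_id.smul continuous_const)
        have := hcont.tendsto 0
        simpa using this
      exact this.mono_left (hl.trans nhdsWithin_le_nhds)
    · have : ∀ᶠ t in 𝓝[≠] (0:ℝ), t ≠ 0 := self_mem_nhdsWithin
      filter_upwards [hl this] with t ht
      simp only [Set.mem_compl_iff, Set.mem_singleton_iff]
      intro hcon
      have : t • e = 0 := by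
        have := congrArg (· - x) hcon
        simpa using this
      rcases smul_eq_zero.mp this with h | h
      · exact ht h
      · exact hene h
  have hxipos : 0 < |x i| := abs_pos.2 hi
  -- frequently u y ≤ -xs i (via t > 0)
  have hfreq₁ : ∃ᶠ y in 𝓝[≠] x, u y ≤ -xs i := by
    have hT := htendsto (𝓝[>] 0) (nhdsWithin_mono 0 (fun t ht => ne_of_gt ht))
    apply hT.frequently
    have hev : ∀ᶠ t in 𝓝[>] (0:ℝ), u (x + t • e) ≤ -xs i := by
      filter_upwards [Ioo_mem_nhdsGT_of_mem (Set.mem_Ico.mpr ⟨le_refl 0, hxipos⟩)] with t ht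
      obtain ⟨ht0, htlt⟩ := ht
      have habs : |t| = t := abs_of_pos ht0
      rw [hepath t (ne_of_gt ht0) (by rwa [habs]), habs]
      rw [neg_div, mul_div_cancel_left₀ _ (ne_of_gt ht0)]
    exact hev.frequently
  -- frequently u y ≤ xs i (via t < 0)
  have hfreq₂ : ∃ᶠ y in 𝓝[≠] x, u y ≤ xs i := by
    have hT := htendsto (𝓝[<] 0) (nhdsWithin_mono 0 (fun t ht => ne_of_lt ht))
    apply hT.frequently
    have hev : ∀ᶠ t in 𝓝[<] (0:ℝ), u (x + t • e) ≤ xs i := by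
      filter_upwards [Ioo_mem_nhdsLT_of_mem (Set.mem_Ioc.mpr ⟨neg_lt_zero.mpr hxipos, le_refl 0⟩)] with t ht
      obtain ⟨htlt, ht0⟩ := ht
      have habs : |t| = -t := abs_of_neg ht0
      rw [hepath t (ne_of_lt ht0) (by rw [habs]; linarith), habs]
      rw [div_neg, neg_div, neg_neg, mul_div_cancel_left₀ _ (ne_of_lt ht0)]
    exact hev.frequently
  have h1 : (0:ℝ) ≤ -xs i :=
    le_trans hxs (Filter.liminf_le_of_frequently_le hfreq₁ hbdd)
  have h2 : (0:ℝ) ≤ xs i :=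
    le_trans hxs (Filter.liminf_le_of_frequently_le hfreq₂ hbdd)
  linarith
end

section
/- For any x ∈ ℝⁿ, every element of X_{I⊥}(x) = {y ∈ ℝⁿ : y_i = 0 whenever x_i ≠ 0} is a proximal subgradient of the counting function c at x, i.e., X_{I⊥}(x) ⊆ ∂_P c(x). -/
open Finset

private lemma abs_coord_le_norm {n : ℕ} (z : EuclideanSpace ℝ (Fin n)) (i : Fin n) :
    |z i| ≤ ‖z‖ := by
  rw [EuclideanSpace.norm_eq, ← Real.sqrt_sq_eq_abs]
  apply Real.sqrt_le_sqrt
  have : z i ^ 2 ≤ ∑ j, ‖z j‖ ^ 2 := by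
    have := Finset.single_le_sum (f := fun j => ‖z j‖ ^ 2) (fun j _ => sq_nonneg _) (mem_univ i)
    simpa [Real.norm_eq_abs, sq_abs] using this
  simpa [Real.norm_eq_abs, sq_abs] using this

theorem XIorth_subset_proximal (n : ℕ) (x : EuclideanSpace ℝ (Fin n))
    (c : EuclideanSpace ℝ (Fin n) → ℝ)
    (hc : ∀ y, c y = (Set.ncard {i : Fin n | y i ≠ 0} : ℝ))
    (xs : EuclideanSpace ℝ (Fin n))
    (hxs : ∀ i, x i ≠ 0 → xs i = 0) :
    ∃ σ ≥ (0 : ℝ), ∃ ρ > (0 : ℝ), ∀ y : EuclideanSpace ℝ (Fin n), ‖y - x‖ ≤ ρ →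
      c x ≤ c y - inner ℝ xs (y - x) + σ * ‖y - x‖ ^ 2 := by
  classical
  set A : Finset (Fin n) := univ.filter (fun i => x i ≠ 0) with hA
  set ρ1 : ℝ := if h : A.Nonempty then (A.inf' h (fun i => |x i|)) / 2 else 1 with hρ1
  have hρ1pos : 0 < ρ1 := by
    rw [hρ1]
    split
    · rename_i h
      apply div_pos _ (by norm_num)
      rw [Finset.lt_inf'_iff]
      intro i hi
      have : x i ≠ 0 := (Finset.mem_filter.mp hi).2
      positivity
    · norm_num
  have hρ1lt : ∀ i, x i ≠ 0 → ρ1 < |x i| := by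
    intro i hi
    have hiA : i ∈ A := Finset.mem_filter.mpr ⟨mem_univ i, hi⟩
    rw [hρ1, dif_pos ⟨i, hiA⟩]
    have h1 : A.inf' ⟨i, hiA⟩ (fun i => |x i|) ≤ |x i| := Finset.inf'_le _ hiA
    have h2 : 0 < |x i| := by positivity
    nlinarith [hρ1pos, hρ1]
  refine ⟨0, le_refl _, min ρ1 (1 / (‖xs‖ + 1)), lt_min hρ1pos (by positivity), ?_⟩
  intro y hy
  have hnx : 0 ≤ ‖xs‖ := norm_nonneg _
  -- coordinates of x in support stay nonzero for y
  have hsupp : ∀ i, x i ≠ 0 → y i ≠ 0 := by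
    intro i hi hyi
    have h1 : |y i - x i| ≤ ‖y - x‖ := by
      have := abs_coord_le_norm (y - x) i
      simpa using this
    rw [hyi, zero_sub, abs_neg] at h1
    have := hρ1lt i hi
    have h2 : ‖y - x‖ ≤ ρ1 := le_trans hy (min_le_left _ _)
    linarith
  set B : Finset (Fin n) := univ.filter (fun i => y i ≠ 0) with hB
  have hAB : A ⊆ B := by
    intro i hi
    exact Finset.mem_filter.mpr ⟨mem_univ i, hsupp i (Finset.mem_filter.mp hi).2⟩
  have hcx : c x = (A.card : ℝ) := by
    rw [hc, hA]
    congr 1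
    rw [Set.ncard_eq_toFinset_card']
    congr 1
    ext i; simp
  have hcy : c y = (B.card : ℝ) := by
    rw [hc, hB]
    congr 1
    rw [Set.ncard_eq_toFinset_card']
    congr 1
    ext i; simp
  -- inner product as a sum over B \ A
  have hinner : (inner ℝ xs (y - x) : ℝ) = ∑ i ∈ B \ A, xs i * (y i - x i) := by
    rw [show (inner ℝ xs (y - x) : ℝ) = ∑ i, xs i * (y i - x i) by
      simp [PiLp.inner_apply, RCLike.inner_apply, mul_comm]]
    symm
    apply Finset.sum_subset (Finset.subset_univ _)
    intro i _ hi
    by_cases hxi : x i ≠ 0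
    · rw [hxs i hxi, zero_mul]
    · push_neg at hxi
      have hyi : y i = 0 := by
        by_contra hyi
        exact hi (Finset.mem_sdiff.mpr ⟨Finset.mem_filter.mpr ⟨mem_univ i, hyi⟩,
          fun h => (Finset.mem_filter.mp h).2 hxi⟩)
      rw [hyi, hxi]; ring
  have hbound : (inner ℝ xs (y - x) : ℝ) ≤ ((B \ A).card : ℝ) := by
    rw [hinner]
    calc ∑ i ∈ B \ A, xs i * (y i - x i) ≤ ∑ i ∈ B \ A, (1 : ℝ) := by
          apply Finset.sum_le_sum
          intro i _
          have h1 : |xs i| ≤ ‖xs‖ := abs_coord_le_norm xs i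
          have h2 : |y i - x i| ≤ ‖y - x‖ := by
            have := abs_coord_le_norm (y - x) i; simpa using this
          have h3 : ‖y - x‖ ≤ 1 / (‖xs‖ + 1) := le_trans hy (min_le_right _ _)
          have h4 : xs i * (y i - x i) ≤ |xs i| * |y i - x i| := by
            calc xs i * (y i - x i) ≤ |xs i * (y i - x i)| := le_abs_self _
              _ = |xs i| * |y i - x i| := abs_mul _ _
          have h5 : |xs i| * |y i - x i| ≤ ‖xs‖ * (1 / (‖xs‖ + 1)) := by
            apply mul_le_mul h1 (le_trans h2 h3) (abs_nonneg _) hnx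
          have h6 : ‖xs‖ * (1 / (‖xs‖ + 1)) ≤ 1 := by
            rw [mul_one_div, div_le_one (by positivity)]
            linarith
          linarith
      _ = ((B \ A).card : ℝ) := by simp
  have hcard : (B.card : ℝ) = (A.card : ℝ) + ((B \ A).card : ℝ) := by
    rw [← Nat.cast_add]
    congr 1
    have := Finset.card_le_card hAB
    rw [Finset.card_sdiff_of_subset hAB]
    omega
  rw [hcx, hcy]
  nlinarith [hbound, hcard]
end

section
/- For any x ∈ ℝⁿ, the Fréchet subdifferential of the counting function c at x equals X_{I⊥}(x) = {y ∈ ℝⁿ : y_i = 0 whenever x_i ≠ 0}. -/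
open Filter Topology

lemma eval_continuous' {n : ℕ} (i : Fin n) :
    Continuous fun y : EuclideanSpace ℝ (Fin n) => y i := by
  exact (EuclideanSpace.proj i).continuous

lemma supp_eventually {n : ℕ} (x : EuclideanSpace ℝ (Fin n)) :
    ∀ᶠ y in 𝓝 x, ∀ i, x i ≠ 0 → y i ≠ 0 := by
  rw [eventually_all]
  intro i
  by_cases hi : x i = 0
  · filter_upwards with y h; exact absurd hi h
  · filter_upwards [(eval_continuous' i).continuousAt.eventually_ne hi] with y hy _
    exact hy

lemma card_decomp {n : ℕ} (x y : EuclideanSpace ℝ (Fin n))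
    (h : ∀ i, x i ≠ 0 → y i ≠ 0) :
    Set.ncard {i : Fin n | y i ≠ 0} =
      Set.ncard {i : Fin n | x i ≠ 0} + Set.ncard {i : Fin n | x i = 0 ∧ y i ≠ 0} := by
  have hU : {i : Fin n | y i ≠ 0} =
      {i : Fin n | x i ≠ 0} ∪ {i : Fin n | x i = 0 ∧ y i ≠ 0} := by
    ext i
    simp only [Set.mem_setOf_eq, Set.mem_union]
    constructor
    · intro hy
      by_cases hx : x i = 0
      · exact Or.inr ⟨hx, hy⟩
      · exact Or.inl hx
    · rintro (hx | ⟨_, hy⟩)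
      · exact h i hx
      · exact hy
  rw [hU, Set.ncard_union_eq ?_ (Set.toFinite _) (Set.toFinite _)]
  rw [Set.disjoint_left]
  rintro i hi ⟨hi0, _⟩
  exact hi hi0

lemma inner_decomp {n : ℕ} (xs x y : EuclideanSpace ℝ (Fin n))
    (hxs : ∀ i, x i ≠ 0 → xs i = 0) :
    (inner ℝ xs (y - x) : ℝ) = ∑ i, if x i = 0 then xs i * y i else 0 := by
  rw [PiLp.inner_apply]
  apply Finset.sum_congr rfl
  intro i _
  by_cases hx : x i = 0
  · simp [hx, PiLp.sub_apply, RCLike.inner_apply, mul_comm]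
  · simp [hx, hxs i hx, RCLike.inner_apply]

theorem frechet_eq_XIorth (n : ℕ) (x : EuclideanSpace ℝ (Fin n))
    (c : EuclideanSpace ℝ (Fin n) → ℝ)
    (hc : ∀ y, c y = (Set.ncard {i : Fin n | y i ≠ 0} : ℝ)) :
    {xs : EuclideanSpace ℝ (Fin n) |
        0 ≤ Filter.liminf
          (fun y => (c y - c x - inner ℝ xs (y - x)) / ‖y - x‖) (𝓝[≠] x)} =
      {xs : EuclideanSpace ℝ (Fin n) | ∀ i, x i ≠ 0 → xs i = 0} := by
  ext xs
  simp only [Set.mem_setOf_eq]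
  set f : EuclideanSpace ℝ (Fin n) → ℝ :=
    fun y => (c y - c x - inner ℝ xs (y - x)) / ‖y - x‖ with hf
  constructor
  · -- liminf ≥ 0 → xs vanishes on support of x
    intro h i hxi
    by_contra hxs
    -- bounded below eventually
    have hbdd : IsBoundedUnder (· ≥ ·) (𝓝[≠] x) f := by
      refine ⟨-‖xs‖, ?_⟩
      rw [eventually_map]
      filter_upwards [eventually_nhdsWithin_of_eventually_nhds (supp_eventually x),
        self_mem_nhdsWithin] with y hy hyx
      have hnorm : (0:ℝ) < ‖y - x‖ := by
        simpa [sub_eq_zero] using (norm_pos_iff.mpr (sub_ne_zero.mpr hyx))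
      have hcy : c x ≤ c y := by
        rw [hc, hc]
        have := Set.ncard_le_ncard (t := {i : Fin n | y i ≠ 0})
          (fun i (hi : x i ≠ 0) => hy i hi) (Set.toFinite _)
        exact_mod_cast this
      have hinner : (inner ℝ xs (y - x) : ℝ) ≤ ‖xs‖ * ‖y - x‖ :=
        le_trans (le_abs_self _) (abs_real_inner_le_norm xs (y - x))
      rw [ge_iff_le, le_div_iff₀ hnorm]
      nlinarith
    -- frequently f y ≤ -|xs i|
    set d : ℝ := if 0 < xs i then 1 else -1 with hd
    have hd1 : |d| = 1 := by
      rw [hd]; split <;> simp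
    have hdxs : xs i * d = |xs i| := by
      rw [hd]
      rcases lt_trichotomy (xs i) 0 with h1 | h1 | h1
      · rw [if_neg (by linarith), abs_of_neg h1]; ring
      · exact absurd h1 hxs
      · rw [if_pos h1, abs_of_pos h1]; ring
    set v : EuclideanSpace ℝ (Fin n) := EuclideanSpace.single i d with hv
    set g : ℝ → EuclideanSpace ℝ (Fin n) := fun t => x + t • v with hg
    have hgx : ∀ t : ℝ, t ≠ 0 → g t ≠ x := by
      intro t ht hcontra
      have : (g t) i = x i := by rw [hcontra]
      rw [hg] at this
      simp only [PiLp.add_apply, PiLp.smul_apply, hv, EuclideanSpace.single_apply,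
        if_pos rfl, if_true, eq_self_iff_true, smul_eq_mul] at this
      have hd0 : d ≠ 0 := by rw [hd]; split <;> norm_num
      have : t * d = 0 := by linarith
      exact (mul_ne_zero ht hd0) this
    have hgt : Tendsto g (𝓝[>] (0:ℝ)) (𝓝[≠] x) := by
      apply tendsto_nhdsWithin_of_tendsto_nhds_of_eventually_within
      · have hcont : Continuous g := continuous_const.add (continuous_id.smul continuous_const)
        have h2 := (hcont.tendsto 0).mono_left (nhdsWithin_le_nhds (s := Set.Ioi (0:ℝ)))
        simpa [hg] using h2
      · filter_upwards [self_mem_nhdsWithin] with t ht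
        exact hgx t (ne_of_gt ht)
    have hfreq : ∃ᶠ y in 𝓝[≠] x, f y ≤ -|xs i| := by
      apply hgt.frequently
      apply Filter.Eventually.frequently
      filter_upwards [Ioo_mem_nhdsGT_of_mem (Set.mem_Ico.mpr ⟨le_refl 0, abs_pos.mpr hxi⟩)]
        with t ht
      obtain ⟨ht0, htx⟩ := ht
      have hsub : g t - x = t • v := add_sub_cancel_left x (t • v)
      have hnorm : ‖g t - x‖ = t := by
        rw [hsub, norm_smul, hv, EuclideanSpace.norm_single, Real.norm_eq_abs,
          Real.norm_eq_abs, hd1, abs_of_pos ht0, mul_one]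
      have hinner : (inner ℝ xs (g t - x) : ℝ) = t * |xs i| := by
        rw [hsub, inner_smul_right, hv, EuclideanSpace.inner_single_right]
        simp [hdxs, mul_comm]
      have hcg : c (g t) = c x := by
        rw [hc, hc]
        congr 1
        congr 1
        ext j
        simp only [Set.mem_setOf_eq, hg, PiLp.add_apply, PiLp.smul_apply, hv,
          EuclideanSpace.single_apply, smul_eq_mul]
        by_cases hj : j = i
        · subst hj
          simp only [if_pos rfl, if_true, eq_self_iff_true]
          constructor
          · intro _
            exact hxi
          · intro _ h0
            have heq : x j = -(t * d) := by linarith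
            have habs : |x j| = |t * d| := by rw [heq, abs_neg]
            rw [abs_mul, hd1, mul_one, abs_of_pos ht0] at habs
            linarith
        · simp [hj]
      have hfeq : f (g t) = -|xs i| := by
        rw [hf]
        simp only
        rw [hcg, hinner, hnorm, sub_self, zero_sub, neg_div, mul_comm,
          mul_div_assoc, div_self (ne_of_gt ht0), mul_one]
      exact le_of_eq hfeq
    have hle := liminf_le_of_frequently_le hfreq hbdd
    have : (0:ℝ) < |xs i| := abs_pos.mpr hxs
    linarith [le_trans h hle]
  · -- xs vanishes on support → liminf ≥ 0
    intro hxs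
    have hev0 : ∀ᶠ y in 𝓝[≠] x, 0 ≤ f y := by
      have hε : (0:ℝ) < (‖xs‖ + 1)⁻¹ := by positivity
      have hball : ∀ᶠ y in 𝓝 x, ‖y - x‖ < (‖xs‖ + 1)⁻¹ := by
        filter_upwards [Metric.ball_mem_nhds x hε] with y hy
        rwa [Metric.mem_ball, dist_eq_norm] at hy
      filter_upwards [eventually_nhdsWithin_of_eventually_nhds (supp_eventually x),
        eventually_nhdsWithin_of_eventually_nhds hball, self_mem_nhdsWithin]
        with y hy hyb hyx
      have hnorm : (0:ℝ) < ‖y - x‖ := by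
        simpa [sub_eq_zero] using (norm_pos_iff.mpr (sub_ne_zero.mpr hyx))
      apply div_nonneg _ (le_of_lt hnorm)
      have hcard := card_decomp x y hy
      have hinner := inner_decomp xs x y hxs
      rw [hc y, hc x, hcard]
      push_cast
      by_cases hA : {i : Fin n | x i = 0 ∧ y i ≠ 0} = ∅
      · have h1 : (inner ℝ xs (y - x) : ℝ) = 0 := by
          rw [hinner]
          apply Finset.sum_eq_zero
          intro j _
          by_cases hj : x j = 0
          · rw [if_pos hj]
            have : ¬ y j ≠ 0 := fun hyj => (Set.eq_empty_iff_forall_notMem.mp hA j) ⟨hj, hyj⟩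
            push_neg at this
            rw [this, mul_zero]
          · rw [if_neg hj]
        rw [hA, h1]
        simp
      · have h1 : 1 ≤ Set.ncard {i : Fin n | x i = 0 ∧ y i ≠ 0} := by
          rw [Nat.one_le_iff_ne_zero]
          intro h0
          exact hA ((Set.ncard_eq_zero (Set.toFinite _)).mp h0)
        have h2 : (inner ℝ xs (y - x) : ℝ) ≤ ‖xs‖ * ‖y - x‖ :=
          le_trans (le_abs_self _) (abs_real_inner_le_norm xs (y - x))
        have h3 : ‖xs‖ * ‖y - x‖ < 1 := by
          have : ‖y - x‖ < (‖xs‖ + 1)⁻¹ := hyb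
          have h4 : ‖xs‖ * ‖y - x‖ ≤ ‖xs‖ * (‖xs‖ + 1)⁻¹ :=
            mul_le_mul_of_nonneg_left (le_of_lt this) (norm_nonneg _)
          have h5 : ‖xs‖ * (‖xs‖ + 1)⁻¹ < 1 := by
            rw [mul_inv_lt_iff₀ (by positivity), one_mul]
            linarith
          linarith
        have h6 : (1:ℝ) ≤ (Set.ncard {i : Fin n | x i = 0 ∧ y i ≠ 0} : ℝ) := by
          exact_mod_cast h1
        linarith
    rw [Filter.liminf_eq]
    by_cases hb : BddAbove {a : ℝ | ∀ᶠ y in 𝓝[≠] x, a ≤ f y}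
    · exact le_csSup hb hev0
    · rw [Real.sSup_of_not_bddAbove hb]
end
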